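/- There exists a constant C > 0 such that for all n, m ≥ 1, HB2₂(n, m) ≥ nm − 2√2·√(nm) − C(√n + √m), where HB2₂ is taken over a binary alphabet; consequently the same lower bound holds for HB2_k(n, m) for every k ≥ 2. -/
import Mathlib


/-- The domain of a partial word (a list over `Option A`, where `none` is the hole):
the set of positions carrying a letter. -/
def PartialWord.domain {A : Type*} (w : List (Option A)) : Finset ℕ :=
  (Finset.range w.length).filter fun i => (w.getD i none).isSome

/-- Two partial words are compatible if they have the same length and agree on the
intersection of their domains. -/
def PartialWord.Compatible {A : Type*} (w v : List (Option A)) : Prop :=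
  w.length = v.length ∧
    ∀ i ∈ PartialWord.domain w ∩ PartialWord.domain v, w.getD i none = v.getD i none

/-- A partial word is unbordered if no nonempty proper prefix is compatible with a
suffix of the same length. -/
def PartialWord.Unbordered {A : Type*} (w : List (Option A)) : Prop :=
  ∀ x y : List (Option A), x <+: w → y <:+ w → x ≠ [] → x.length < w.length →
    x.length = y.length → ¬ PartialWord.Compatible x y

/-- The number of holes of a partial word. -/
def PartialWord.holes {A : Type*} (w : List (Option A)) : ℕ :=
  w.countP fun x => x.isNone

/-- `u` repeated `t` times. -/
def listPow {α : Type*} (u : List α) (t : ℕ) : List α := (List.replicate t u).flatten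

/-- A complete sparse ruler of length `n`. -/
def IsCompleteRuler (n : ℕ) (R : Finset ℕ) : Prop :=
  (∀ x ∈ R, x ≤ n) ∧ 0 ∈ R ∧ n ∈ R ∧ ∀ d ≤ n, ∃ r ∈ R, ∃ s ∈ R, r = s + d

/-- Minimum number of marks of a complete sparse ruler of length `n`. -/
noncomputable def M1 (n : ℕ) : ℕ :=
  sInf {k | ∃ R : Finset ℕ, IsCompleteRuler n R ∧ R.card = k}

/-- Maximum number of holes an unbordered partial word of length `n` over an alphabet
of size `k` can have. -/
noncomputable def HB (k n : ℕ) : ℕ :=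
  sSup {h | ∃ w : List (Option (Fin k)),
    w.length = n ∧ PartialWord.Unbordered w ∧ PartialWord.holes w = h}

/-- The ruler (set of partial sums) given by a difference representation. -/
def rulerOfDiffs (D : List ℕ) : Finset ℕ :=
  ((List.range (D.length + 1)).map fun t => (D.take t).sum).toFinset

/-- The difference representation of the extended Wichmann ruler `w₁(r,s,i,j)`. -/
def wichmannDiffs (r s i j : ℕ) : List ℕ :=
  List.replicate r 1 ++ [r + 1] ++ List.replicate r (2 * r + 1) ++
    List.replicate s (4 * r + 3) ++ List.replicate (r + 1) (2 * r + 2) ++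
    List.replicate r 1 ++ List.replicate i (r + 1) ++ [j]

/-- A complete two-dimensional sparse ruler: an `(n,m)`-ruler. -/
def IsRuler2 (n m : ℕ) (R : Finset (ℕ × ℕ)) : Prop :=
  (∀ p ∈ R, p.1 < n ∧ p.2 < m) ∧
    ∀ x y : ℤ, |x| ≤ (n : ℤ) - 1 → |y| ≤ (m : ℤ) - 1 →
      ∃ p ∈ R, ∃ q ∈ R, (p.1 : ℤ) - (q.1 : ℤ) = x ∧ (p.2 : ℤ) - (q.2 : ℤ) = y

/-- Minimum number of marks of an `(n,m)`-ruler. -/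
noncomputable def M2 (n m : ℕ) : ℕ :=
  sInf {k | ∃ R : Finset (ℕ × ℕ), IsRuler2 n m R ∧ R.card = k}

/-- The domain of an `n` by `m` two-dimensional partial word. -/
def domain2 {A : Type*} (n m : ℕ) (w : ℕ × ℕ → Option A) : Finset (ℕ × ℕ) :=
  (Finset.range n ×ˢ Finset.range m).filter fun p => (w p).isSome

/-- An `n` by `m` two-dimensional partial word is unbordered if its domain is an
`(n,m)`-ruler and every nonzero measurable vector can be measured between two
positions carrying distinct letters. -/
def Unbordered2 {A : Type*} (n m : ℕ) (w : ℕ × ℕ → Option A) : Prop :=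
  IsRuler2 n m (domain2 n m w) ∧
    ∀ x y : ℤ, |x| ≤ (n : ℤ) - 1 → |y| ≤ (m : ℤ) - 1 → ¬(x = 0 ∧ y = 0) →
      ∃ p ∈ domain2 n m w, ∃ q ∈ domain2 n m w,
        (p.1 : ℤ) - (q.1 : ℤ) = x ∧ (p.2 : ℤ) - (q.2 : ℤ) = y ∧ w p ≠ w q

/-- Number of holes of an `n` by `m` two-dimensional partial word. -/
def holes2 {A : Type*} (n m : ℕ) (w : ℕ × ℕ → Option A) : ℕ :=
  n * m - (domain2 n m w).card

/-- Maximum number of holes an unbordered `n` by `m` two-dimensional partial word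
over an alphabet of size `k` can have. -/
noncomputable def HB2 (k n m : ℕ) : ℕ :=
  sSup {h | ∃ w : ℕ × ℕ → Option (Fin k), Unbordered2 n m w ∧ holes2 n m w = h}

namespace HB2Aux

variable {A : Type*}

lemma mem_domain2 {n m : ℕ} {w : ℕ × ℕ → Option A} {p : ℕ × ℕ} :
    p ∈ domain2 n m w ↔ p.1 < n ∧ p.2 < m ∧ (w p).isSome := by
  simp [domain2, Finset.mem_filter, Finset.mem_product, and_assoc]

lemma card_domain2_le (n m : ℕ) (w : ℕ × ℕ → Option A) :
    (domain2 n m w).card ≤ n * m := by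
  calc (domain2 n m w).card ≤ (Finset.range n ×ˢ Finset.range m).card :=
        Finset.card_filter_le _ _
    _ = n * m := by simp [Finset.card_product]

lemma le_HB2 {k n m : ℕ} {w : ℕ × ℕ → Option (Fin k)} (h : Unbordered2 n m w) :
    holes2 n m w ≤ HB2 k n m := by
  apply le_csSup
  · exact ⟨n * m, fun h ⟨w', _, hw'⟩ => hw' ▸ Nat.sub_le _ _⟩
  · exact ⟨w, h, rfl⟩

/-- a multiple of `a` in the window `[x, x+a)`. -/
lemma mult_in_window (a x : ℕ) (ha : 1 ≤ a) :
    ∃ M, M % a = 0 ∧ x ≤ M ∧ M < x + a := by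
  refine ⟨a * ((x + a - 1) / a), Nat.mul_mod_right _ _, ?_, ?_⟩ <;>
  · have h1 := Nat.div_add_mod (x + a - 1) a
    have h2 : (x + a - 1) % a < a := Nat.mod_lt _ ha
    omega


/-- Natural-number level covering property with colors, for both horizontal directions. -/
def Cover2 {A : Type*} (n m : ℕ) (w : ℕ × ℕ → Option A) : Prop :=
  ∀ u v : ℕ, u ≤ n - 1 → v ≤ m - 1 → ¬(u = 0 ∧ v = 0) →
    (∃ p q : ℕ × ℕ, p ∈ domain2 n m w ∧ q ∈ domain2 n m w ∧
      p.1 = q.1 + u ∧ p.2 = q.2 + v ∧ w p ≠ w q) ∧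
    (∃ p q : ℕ × ℕ, p ∈ domain2 n m w ∧ q ∈ domain2 n m w ∧
      q.1 = p.1 + u ∧ p.2 = q.2 + v ∧ w p ≠ w q)

lemma mk_unbordered {n m : ℕ} {w : ℕ × ℕ → Option A} (hn : 1 ≤ n) (hm : 1 ≤ m)
    (p₀ : ℕ × ℕ) (hp₀ : p₀ ∈ domain2 n m w) (H : Cover2 n m w) :
    Unbordered2 n m w := by
  have cover' : ∀ x y : ℤ, |x| ≤ (n : ℤ) - 1 → |y| ≤ (m : ℤ) - 1 → ¬(x = 0 ∧ y = 0) →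
      ∃ p ∈ domain2 n m w, ∃ q ∈ domain2 n m w,
        (p.1 : ℤ) - (q.1 : ℤ) = x ∧ (p.2 : ℤ) - (q.2 : ℤ) = y ∧ w p ≠ w q := by
    intro x y hx hy hxy
    set u := x.natAbs with hu
    set v := y.natAbs with hv
    have hux : (u : ℤ) = |x| := Int.abs_eq_natAbs x ▸ rfl
    have hvy : (v : ℤ) = |y| := Int.abs_eq_natAbs y ▸ rfl
    have hun : u ≤ n - 1 := by
      have h1 : (u : ℤ) ≤ (n : ℤ) - 1 := hux ▸ hx
      omega
    have hvn : v ≤ m - 1 := by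
      have h1 : (v : ℤ) ≤ (m : ℤ) - 1 := hvy ▸ hy
      omega
    have huv : ¬(u = 0 ∧ v = 0) := by
      rintro ⟨h1, h2⟩
      exact hxy ⟨Int.natAbs_eq_zero.mp h1, Int.natAbs_eq_zero.mp h2⟩
    rcases le_or_gt 0 x with hx0 | hx0 <;> rcases le_or_gt 0 y with hy0 | hy0
    · have hux' : (u : ℤ) = x := by rw [hux, abs_of_nonneg hx0]
      have hvy' : (v : ℤ) = y := by rw [hvy, abs_of_nonneg hy0]
      obtain ⟨⟨p, q, hp, hq, h1, h2, hne⟩, -⟩ := H u v hun hvn huv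
      exact ⟨p, hp, q, hq, by omega, by omega, hne⟩
    · have hux' : (u : ℤ) = x := by rw [hux, abs_of_nonneg hx0]
      have hvy' : (v : ℤ) = -y := by rw [hvy, abs_of_neg hy0]
      obtain ⟨-, p, q, hp, hq, h1, h2, hne⟩ := H u v hun hvn huv
      exact ⟨q, hq, p, hp, by omega, by omega, hne.symm⟩
    · have hux' : (u : ℤ) = -x := by rw [hux, abs_of_neg hx0]
      have hvy' : (v : ℤ) = y := by rw [hvy, abs_of_nonneg hy0]
      obtain ⟨-, p, q, hp, hq, h1, h2, hne⟩ := H u v hun hvn huv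
      exact ⟨p, hp, q, hq, by omega, by omega, hne⟩
    · have hux' : (u : ℤ) = -x := by rw [hux, abs_of_neg hx0]
      have hvy' : (v : ℤ) = -y := by rw [hvy, abs_of_neg hy0]
      obtain ⟨⟨p, q, hp, hq, h1, h2, hne⟩, -⟩ := H u v hun hvn huv
      exact ⟨q, hq, p, hp, by omega, by omega, hne.symm⟩
  constructor
  · constructor
    · intro p hp; rw [mem_domain2] at hp; exact ⟨hp.1, hp.2.1⟩
    · intro x y hx hy
      by_cases h : x = 0 ∧ y = 0
      · exact ⟨p₀, hp₀, p₀, hp₀, by simp [h.1], by simp [h.2]⟩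
      · obtain ⟨p, hp, q, hq, h1, h2, _⟩ := cover' x y hx hy h
        exact ⟨p, hp, q, hq, h1, h2⟩
  · exact cover'

lemma domain2_transpose {n m : ℕ} (w : ℕ × ℕ → Option A) :
    domain2 m n (fun p => w p.swap) = (domain2 n m w).image Prod.swap := by
  ext ⟨X, Y⟩
  simp only [mem_domain2, Finset.mem_image, Prod.swap_prod_mk]
  constructor
  · rintro ⟨h1, h2, h3⟩
    exact ⟨(Y, X), ⟨h2, h1, h3⟩, rfl⟩
  · rintro ⟨⟨a, b⟩, hab, h⟩
    rw [Prod.swap_prod_mk, Prod.mk.injEq] at h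
    obtain ⟨rfl, rfl⟩ := h
    exact ⟨hab.2.1, hab.1, hab.2.2⟩

lemma card_domain2_transpose {n m : ℕ} (w : ℕ × ℕ → Option A) :
    (domain2 m n (fun p => w p.swap)).card = (domain2 n m w).card := by
  rw [domain2_transpose, Finset.card_image_of_injective _ Prod.swap_injective]

lemma unbordered_transpose {n m : ℕ} {w : ℕ × ℕ → Option A}
    (h : Unbordered2 n m w) : Unbordered2 m n (fun p => w p.swap) := by
  have hmem : ∀ p : ℕ × ℕ, p ∈ domain2 n m w →
      p.swap ∈ domain2 m n (fun p => w p.swap) := by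
    intro p hp
    rw [mem_domain2] at hp ⊢
    simpa [Prod.swap] using ⟨hp.2.1, hp.1, hp.2.2⟩
  constructor
  · constructor
    · intro p hp
      rw [mem_domain2] at hp
      exact ⟨hp.1, hp.2.1⟩
    · intro x y hx hy
      obtain ⟨p, hp, q, hq, h1, h2⟩ := h.1.2 y x hy hx
      exact ⟨p.swap, hmem p hp, q.swap, hmem q hq, h2, h1⟩
  · intro x y hx hy hxy
    obtain ⟨p, hp, q, hq, h1, h2, h3⟩ := h.2 y x hy hx (by tauto)
    exact ⟨p.swap, hmem p hp, q.swap, hmem q hq, h2, h1, by simpa using h3⟩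

lemma grid_pt {a n u : ℕ} (ha : 1 ≤ a) (han : a ≤ n - 1) (hu1 : 1 ≤ u) (hun : u ≤ n - 1) :
    ∃ g, (g % a = 0 ∨ g = n - 1) ∧ a ≤ g ∧ g ≤ n - 1 ∧ u ≤ g ∧ g ≤ u + a - 1 := by
  obtain ⟨M, hM0, hM1, hM2⟩ := mult_in_window a u ha
  rcases le_or_gt M (n - 1) with hle | hlt
  · have haM : a ≤ M := Nat.le_of_dvd (by omega) (Nat.dvd_of_mod_eq_zero hM0)
    exact ⟨M, Or.inl hM0, haM, hle, hM1, by omega⟩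
  · exact ⟨n - 1, Or.inr rfl, han, le_refl _, by omega, by omega⟩

/-- Mapping letters through an injection preserves unborderedness. -/
lemma unbordered_map {B : Type*} {n m : ℕ} {w : ℕ × ℕ → Option A} (f : A → B)
    (hf : Function.Injective f) (h : Unbordered2 n m w) :
    Unbordered2 n m (fun p => (w p).map f) := by
  have hdom : domain2 n m (fun p => (w p).map f) = domain2 n m w := by
    ext p; simp [mem_domain2]
  constructor
  · rw [hdom]; exact h.1
  · rw [hdom]
    intro x y hx hy hxy
    obtain ⟨p, hp, q, hq, h1, h2, h3⟩ := h.2 x y hx hy hxy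
    refine ⟨p, hp, q, hq, h1, h2, fun hc => h3 ?_⟩
    exact Option.map_injective hf hc

lemma card_domain2_map {B : Type*} {n m : ℕ} (w : ℕ × ℕ → Option A) (f : A → B) :
    (domain2 n m (fun p => (w p).map f)).card = (domain2 n m w).card := by
  congr 1; ext p; simp [mem_domain2]

/-- The quasi-one-dimensional construction used when `m` is small. -/
def colW (n a : ℕ) : ℕ × ℕ → Option Bool := fun p =>
  if p.1 = a + 1 then some (decide (p.2 = 0))
  else if p.1 < a then some true
  else if (p.1 % a = 0 ∨ p.1 = n - 1) ∧ p.1 ≤ n - 1 then some false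
  else none

theorem col_exists (n m : ℕ) (hn : 16 ≤ n) (hm1 : 1 ≤ m) :
    Unbordered2 n m (colW n (Nat.sqrt n)) ∧
      (domain2 n m (colW n (Nat.sqrt n))).card ≤ m * (2 * Nat.sqrt n + 5) := by
  set a := Nat.sqrt n with hadef
  have ha4 : 4 ≤ a := Nat.le_sqrt.mpr (by omega)
  have haa : a * a ≤ n := by
    have := Nat.sqrt_le' n
    rwa [pow_two] at this
  have haa2 : n ≤ a * a + 2 * a := by
    have h := Nat.lt_succ_sqrt' n
    rw [pow_two] at h
    nlinarith
  have h4a : 4 * a ≤ a * a := Nat.mul_le_mul_right a ha4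
  have han : a + 3 ≤ n := by omega
  -- value lemmas
  have hva : ∀ Y, colW n a (a + 1, Y) = some (decide (Y = 0)) := by
    intro Y; simp [colW]
  have hvb : ∀ X Y, X < a → colW n a (X, Y) = some true := by
    intro X Y h
    have h2 : X ≠ a + 1 := by omega
    simp [colW, h, h2]
  have hvc : ∀ X Y, a ≤ X → X ≠ a + 1 → (X % a = 0 ∨ X = n - 1) → X ≤ n - 1 →
      colW n a (X, Y) = some false := by
    intro X Y h1 h2 h3 h4
    simp [colW, h2, Nat.not_lt.mpr h1, h3, h4]
  have hcov : Cover2 n m (colW n a) := by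
    intro u v hun hvm huv
    rcases Nat.eq_zero_or_pos u with hu0 | hu1
    · subst hu0
      have hv1 : 1 ≤ v := by omega
      have hp : (a + 1, v) ∈ domain2 n m (colW n a) :=
        mem_domain2.mpr ⟨by omega, by omega, by rw [hva]; rfl⟩
      have hq : (a + 1, 0) ∈ domain2 n m (colW n a) :=
        mem_domain2.mpr ⟨by omega, by omega, by rw [hva]; rfl⟩
      have hne : colW n a (a + 1, v) ≠ colW n a (a + 1, 0) := by
        have hv0 : v ≠ 0 := by omega
        rw [hva, hva]
        simp [hv0]
      constructor
      · exact ⟨(a + 1, v), (a + 1, 0), hp, hq, by omega, by omega, hne⟩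
      · exact ⟨(a + 1, v), (a + 1, 0), hp, hq, by omega, by omega, hne⟩
    · obtain ⟨g, hg1, hg2, hg3, hg4, hg5⟩ :=
        grid_pt (a := a) (n := n) (u := u) (by omega) (by omega) hu1 hun
      have hamod : (a + 1) % a = 1 := by
        rw [Nat.add_mod_left]
        exact Nat.mod_eq_of_lt (by omega)
      have hgne : g ≠ a + 1 := by
        rintro rfl
        rcases hg1 with h | h
        · omega
        · omega
      have hpv : colW n a (g, v) = some false := hvc g v hg2 hgne hg1 hg3
      have hqv : colW n a (g - u, 0) = some true := hvb (g - u) 0 (by omega)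
      have hp : (g, v) ∈ domain2 n m (colW n a) :=
        mem_domain2.mpr ⟨by omega, by omega, by rw [hpv]; rfl⟩
      have hq : (g - u, 0) ∈ domain2 n m (colW n a) :=
        mem_domain2.mpr ⟨by omega, by omega, by rw [hqv]; rfl⟩
      have hpv' : colW n a (g, 0) = some false := hvc g 0 hg2 hgne hg1 hg3
      have hqv' : colW n a (g - u, v) = some true := hvb (g - u) v (by omega)
      have hp' : (g, 0) ∈ domain2 n m (colW n a) :=
        mem_domain2.mpr ⟨by omega, by omega, by rw [hpv']; rfl⟩
      have hq' : (g - u, v) ∈ domain2 n m (colW n a) :=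
        mem_domain2.mpr ⟨by omega, by omega, by rw [hqv']; rfl⟩
      constructor
      · exact ⟨(g, v), (g - u, 0), hp, hq, by omega, by omega, by
          rw [hpv, hqv]; simp⟩
      · exact ⟨(g - u, v), (g, 0), hq', hp', by omega, by omega, by
          rw [hpv', hqv']; simp⟩
  have hunb : Unbordered2 n m (colW n a) := by
    refine mk_unbordered (by omega) hm1 (0, 0) ?_ hcov
    exact mem_domain2.mpr ⟨by omega, by omega, by rw [hvb 0 0 (by omega)]; rfl⟩
  refine ⟨hunb, ?_⟩
  -- cardinality bound
  have hsub : domain2 n m (colW n a) ⊆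
      (insert (a + 1) ((Finset.range a) ∪
        ((Finset.range ((n - 1) / a + 1)).image (· * a)) ∪ {n - 1})) ×ˢ Finset.range m := by
    intro p hp
    rw [mem_domain2] at hp
    obtain ⟨hp1, hp2, hp3⟩ := hp
    rw [Finset.mem_product, Finset.mem_range]
    refine ⟨?_, hp2⟩
    rw [Finset.mem_insert]
    unfold colW at hp3
    split_ifs at hp3 with h1 h2 h3
    · exact Or.inl h1
    · exact Or.inr (by simp [Finset.mem_union, Finset.mem_range]; omega)
    · refine Or.inr ?_
      rw [Finset.mem_union, Finset.mem_union]
      rcases h3.1 with h | h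
      · have hdvd : a ∣ p.1 := Nat.dvd_of_mod_eq_zero h
        have heq : p.1 / a * a = p.1 := Nat.div_mul_cancel hdvd
        refine Or.inl (Or.inr ?_)
        rw [Finset.mem_image]
        refine ⟨p.1 / a, ?_, heq⟩
        rw [Finset.mem_range, Nat.lt_succ_iff]
        exact Nat.div_le_div_right h3.2
      · exact Or.inr (by simp [h])
    · simp at hp3
  have hcard := Finset.card_le_card hsub
  rw [Finset.card_product, Finset.card_range] at hcard
  have hd : (n - 1) / a ≤ a + 1 := by
    have h1 : (n - 1) / a * a ≤ n - 1 := Nat.div_mul_le_self _ _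
    by_contra hcon
    have h2 : (a + 2) * a ≤ (n - 1) / a * a := Nat.mul_le_mul_right a (by omega)
    have h3 : a * a + 2 * a ≤ n - 1 := by
      calc a * a + 2 * a = (a + 2) * a := by ring
        _ ≤ (n - 1) / a * a := h2
        _ ≤ n - 1 := h1
    have h5 : n - 1 < n := by omega
    linarith
  have hcs : (insert (a + 1) ((Finset.range a) ∪
      ((Finset.range ((n - 1) / a + 1)).image (· * a)) ∪ {n - 1})).card ≤ 2 * a + 5 := by
    calc _ ≤ ((Finset.range a) ∪
        ((Finset.range ((n - 1) / a + 1)).image (· * a)) ∪ {n - 1}).card + 1 :=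
          Finset.card_insert_le _ _
      _ ≤ (Finset.range a).card + ((Finset.range ((n - 1) / a + 1)).image (· * a)).card
          + ({n - 1} : Finset ℕ).card + 1 := by
          have := Finset.card_union_le ((Finset.range a) ∪
            ((Finset.range ((n - 1) / a + 1)).image (· * a))) ({n - 1} : Finset ℕ)
          have := Finset.card_union_le (Finset.range a)
            ((Finset.range ((n - 1) / a + 1)).image (· * a))
          omega
      _ ≤ a + ((n - 1) / a + 1) + 1 + 1 := by
          have := Finset.card_image_le (s := Finset.range ((n - 1) / a + 1)) (f := (· * a))
          simp only [Finset.card_range, Finset.card_singleton] at *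
          omega
      _ ≤ 2 * a + 5 := by omega
  calc (domain2 n m (colW n a)).card ≤ _ * m := hcard
    _ ≤ (2 * a + 5) * m := Nat.mul_le_mul_right m hcs
    _ = m * (2 * a + 5) := Nat.mul_comm _ _

/-- The main two-dimensional construction: two bottom corner blocks of letter `true`,
a sparse grid of letter `false`, a special partial row `m-1` and a special row `b+1`. -/
def mainW (n m a b : ℕ) : ℕ × ℕ → Option Bool := fun p =>
  if p.2 < b ∧ (p.1 < a ∨ (n - a ≤ p.1 ∧ p.1 ≤ n - 1)) then some true
  else if p.2 = m - 1 ∧ 1 ≤ p.1 ∧ p.1 < a then some true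
  else if p.2 = b + 1 ∧ ((p.1 % a = 0 ∨ p.1 = n - 1) ∧ p.1 ≤ n - 1) then
    (if p.1 = 0 then some false else some true)
  else if ((p.1 % a = 0 ∨ p.1 = n - 1) ∧ p.1 ≤ n - 1) ∧
      ((p.2 % b = 0 ∨ p.2 = m - 1) ∧ b ≤ p.2 ∧ p.2 ≤ m - 1) then some false
  else none

theorem main_exists (n m : ℕ) (hn : 16 ≤ n) (hm : 16 ≤ m) :
    Unbordered2 n m (mainW n m (Nat.sqrt n) (Nat.sqrt (m / 2))) ∧
    (domain2 n m (mainW n m (Nat.sqrt n) (Nat.sqrt (m / 2)))).card ≤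
      2 * Nat.sqrt n * Nat.sqrt (m / 2) + Nat.sqrt n +
      ((n - 1) / Nat.sqrt n + 2) +
      ((n - 1) / Nat.sqrt n + 2) * ((m - 1) / Nat.sqrt (m / 2) + 2) := by
  set a := Nat.sqrt n with hadef
  set b := Nat.sqrt (m / 2) with hbdef
  set w := mainW n m a b with hwdef
  have ha4 : 4 ≤ a := Nat.le_sqrt.mpr (by omega)
  have haa : a * a ≤ n := by have := Nat.sqrt_le' n; rwa [pow_two] at this
  have haa2 : n ≤ a * a + 2 * a := by
    have h := Nat.lt_succ_sqrt' n; rw [pow_two] at h; nlinarith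
  have h4a : 4 * a ≤ a * a := Nat.mul_le_mul_right a ha4
  have han : a + 3 ≤ n := by omega
  have hb2 : 2 ≤ b := Nat.le_sqrt.mpr (by omega)
  have hbb : 2 * (b * b) ≤ m := by
    have h1 : b * b ≤ m / 2 := by have := Nat.sqrt_le' (m / 2); rwa [pow_two] at this
    omega
  have h4b : 4 * b ≤ 2 * (b * b) := by nlinarith
  have hbm : b + 4 ≤ m := by omega
  have hamod : (a + 1) % a = 1 := by
    rw [Nat.add_mod_left]; exact Nat.mod_eq_of_lt (by omega)
  have hbmod : (b + 1) % b = 1 := by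
    rw [Nat.add_mod_left]; exact Nat.mod_eq_of_lt (by omega)
  have xg_cases : ∀ X, (X % a = 0 ∨ X = n - 1) ∧ X ≤ n - 1 → X = 0 ∨ a ≤ X := by
    intro X hX
    rcases lt_or_ge X a with h | h
    · rcases hX.1 with h1 | h1
      · left; rwa [Nat.mod_eq_of_lt h] at h1
      · omega
    · right; exact h
  -- value lemmas
  have hBL : ∀ X Y, Y < b → X < a → w (X, Y) = some true := by
    intro X Y h1 h2
    show mainW n m a b (X, Y) = some true
    unfold mainW
    rw [if_pos ⟨h1, Or.inl h2⟩]
  have hBR : ∀ X Y, Y < b → n - a ≤ X → X ≤ n - 1 → w (X, Y) = some true := by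
    intro X Y h1 h2 h3
    show mainW n m a b (X, Y) = some true
    unfold mainW
    rw [if_pos ⟨h1, Or.inr ⟨h2, h3⟩⟩]
  have hC2 : ∀ X, 1 ≤ X → X < a → w (X, m - 1) = some true := by
    intro X h1 h2
    show mainW n m a b (X, m - 1) = some true
    unfold mainW
    rw [if_neg (by rintro ⟨hc, -⟩; omega), if_pos ⟨rfl, h1, h2⟩]
  have hG : ∀ X Y, (X % a = 0 ∨ X = n - 1) ∧ X ≤ n - 1 →
      (Y % b = 0 ∨ Y = m - 1) ∧ b ≤ Y ∧ Y ≤ m - 1 → w (X, Y) = some false := by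
    intro X Y hX hY
    show mainW n m a b (X, Y) = some false
    unfold mainW
    rw [if_neg (fun hc => by omega), if_neg ?_, if_neg ?_,
      if_pos ⟨hX, hY⟩]
    · rintro ⟨hY', -⟩
      have hY'' : Y = b + 1 := hY'
      rcases hY.1 with h | h
      · rw [hY'', hbmod] at h; exact one_ne_zero h
      · omega
    · rintro ⟨hY', hx1, hx2⟩
      rcases xg_cases X hX with h | h <;> omega
  have hS0 : w (0, b + 1) = some false := by
    show mainW n m a b (0, b + 1) = some false
    unfold mainW
    rw [if_neg (fun hc => by omega), if_neg (by rintro ⟨hc, h1, -⟩; omega),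
      if_pos ⟨rfl, Or.inl (Nat.zero_mod a), by omega⟩, if_pos rfl]
  have hS1 : ∀ X, (X % a = 0 ∨ X = n - 1) ∧ X ≤ n - 1 → 1 ≤ X →
      w (X, b + 1) = some true := by
    intro X hX h1
    show mainW n m a b (X, b + 1) = some true
    unfold mainW
    rw [if_neg (fun hc => by omega), if_neg (by rintro ⟨hc, -⟩; omega),
      if_pos ⟨rfl, hX⟩, if_neg (by omega)]
  have hmem : ∀ X Y c, X ≤ n - 1 → Y ≤ m - 1 → w (X, Y) = some c →
      (X, Y) ∈ domain2 n m w := by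
    intro X Y c h1 h2 h3
    exact mem_domain2.mpr ⟨by omega, by omega, by rw [h3]; rfl⟩
  have hcov : Cover2 n m w := by
    intro u v hun hvm huv
    rcases Nat.eq_zero_or_pos v with hv0 | hv1
    · -- v = 0, so u ≥ 1 : use row m-1 or row b+1
      subst hv0
      have hu1 : 1 ≤ u := by omega
      by_cases hXG : u % a = 0 ∨ u = n - 1
      · -- row b + 1
        have hp := hS1 u ⟨hXG, hun⟩ hu1
        have hq := hS0
        have hpm := hmem u (b + 1) true hun (by omega) hp
        have hqm := hmem 0 (b + 1) false (by omega) (by omega) hq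
        have hne : w (u, b + 1) ≠ w (0, b + 1) := by rw [hp, hq]; simp
        exact ⟨⟨(u, b + 1), (0, b + 1), hpm, hqm, by omega, by omega, hne⟩,
          ⟨(0, b + 1), (u, b + 1), hqm, hpm, by omega, by omega, hne.symm⟩⟩
      · -- row m - 1
        obtain ⟨g, hg1, hg2, hg3, hg4, hg5⟩ :=
          grid_pt (a := a) (n := n) (u := u) (by omega) (by omega) hu1 hun
        have hr1 : 1 ≤ g - u := by
          rcases Nat.eq_zero_or_pos (g - u) with h | h
          · exfalso
            have : g = u := by omega
            subst this
            rcases hg1 with h1 | h1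
            · exact hXG (Or.inl h1)
            · exact hXG (Or.inr h1)
          · exact h
        have hp := hG g (m - 1) ⟨hg1, hg3⟩ ⟨Or.inr rfl, by omega, le_refl _⟩
        have hq := hC2 (g - u) hr1 (by omega)
        have hpm := hmem g (m - 1) false hg3 (le_refl _) hp
        have hqm := hmem (g - u) (m - 1) true (by omega) (le_refl _) hq
        have hne : w (g, m - 1) ≠ w (g - u, m - 1) := by rw [hp, hq]; simp
        exact ⟨⟨(g, m - 1), (g - u, m - 1), hpm, hqm, by omega, by omega, hne⟩,
          ⟨(g - u, m - 1), (g, m - 1), hqm, hpm, by omega, by omega, hne.symm⟩⟩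
    · -- v ≥ 1
      obtain ⟨h', hh1, hh2, hh3, hh4, hh5⟩ :=
        grid_pt (a := b) (n := m) (u := v) (by omega) (by omega) hv1 hvm
      have hYG : (h' % b = 0 ∨ h' = m - 1) ∧ b ≤ h' ∧ h' ≤ m - 1 := ⟨hh1, hh2, hh3⟩
      constructor
      · -- direction +u (if u = 0 fall back to the other pair below, still valid)
        rcases Nat.eq_zero_or_pos u with hu0 | hu1
        · subst hu0
          -- use grid column 0 against left block
          have hp := hG 0 h' ⟨Or.inl (Nat.zero_mod a), by omega⟩ hYG
          have hq := hBL 0 (h' - v) (by omega) (by omega)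
          have hpm := hmem 0 h' false (by omega) hh3 hp
          have hqm := hmem 0 (h' - v) true (by omega) (by omega) hq
          exact ⟨(0, h'), (0, h' - v), hpm, hqm, by omega, by omega, by
            rw [hp, hq]; simp⟩
        · obtain ⟨g, hg1, hg2, hg3, hg4, hg5⟩ :=
            grid_pt (a := a) (n := n) (u := u) (by omega) (by omega) hu1 hun
          have hp := hG g h' ⟨hg1, hg3⟩ hYG
          have hq := hBL (g - u) (h' - v) (by omega) (by omega)
          have hpm := hmem g h' false hg3 hh3 hp
          have hqm := hmem (g - u) (h' - v) true (by omega) (by omega) hq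
          exact ⟨(g, h'), (g - u, h' - v), hpm, hqm, by omega, by omega, by
            rw [hp, hq]; simp⟩
      · -- direction -u : grid against right block
        rcases le_or_gt (n - a) u with hbig | hsmall
        · -- extreme u : use column 0
          have hp := hG 0 h' ⟨Or.inl (Nat.zero_mod a), by omega⟩ hYG
          have hq := hBR u (h' - v) (by omega) hbig hun
          have hpm := hmem 0 h' false (by omega) hh3 hp
          have hqm := hmem u (h' - v) true hun (by omega) hq
          exact ⟨(0, h'), (u, h' - v), hpm, hqm, by omega, by omega, by
            rw [hp, hq]; simp⟩
        · obtain ⟨M, hM0, hM1, hM2⟩ := mult_in_window a (n - a - u) (by omega)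
          have hMn : M ≤ n - 1 - u := by omega
          have hp := hG M h' ⟨Or.inl hM0, by omega⟩ hYG
          have hq := hBR (M + u) (h' - v) (by omega) (by omega) (by omega)
          have hpm := hmem M h' false (by omega) hh3 hp
          have hqm := hmem (M + u) (h' - v) true (by omega) (by omega) hq
          exact ⟨(M, h'), (M + u, h' - v), hpm, hqm, by omega, by omega, by
            rw [hp, hq]; simp⟩
  have hunb : Unbordered2 n m w := by
    refine mk_unbordered (by omega) (by omega) (0, 0) ?_ hcov
    exact hmem 0 0 true (by omega) (by omega) (hBL 0 0 (by omega) (by omega))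
  refine ⟨hunb, ?_⟩
  -- cardinality
  have hXGset : ∀ X, (X % a = 0 ∨ X = n - 1) ∧ X ≤ n - 1 →
      X ∈ insert (n - 1) ((Finset.range ((n - 1) / a + 1)).image (· * a)) := by
    intro X hX
    rw [Finset.mem_insert]
    rcases hX.1 with h | h
    · have hdvd : a ∣ X := Nat.dvd_of_mod_eq_zero h
      have heq : X / a * a = X := Nat.div_mul_cancel hdvd
      refine Or.inr ?_
      rw [Finset.mem_image]
      refine ⟨X / a, ?_, heq⟩
      rw [Finset.mem_range, Nat.lt_succ_iff]
      exact Nat.div_le_div_right hX.2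
    · exact Or.inl h
  have hYGset : ∀ Y, (Y % b = 0 ∨ Y = m - 1) ∧ b ≤ Y ∧ Y ≤ m - 1 →
      Y ∈ insert (m - 1) ((Finset.range ((m - 1) / b + 1)).image (· * b)) := by
    intro Y hY
    rw [Finset.mem_insert]
    rcases hY.1 with h | h
    · have hdvd : b ∣ Y := Nat.dvd_of_mod_eq_zero h
      have heq : Y / b * b = Y := Nat.div_mul_cancel hdvd
      refine Or.inr ?_
      rw [Finset.mem_image]
      refine ⟨Y / b, ?_, heq⟩
      rw [Finset.mem_range, Nat.lt_succ_iff]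
      exact Nat.div_le_div_right hY.2.2
    · exact Or.inl h
  set XS := insert (n - 1) ((Finset.range ((n - 1) / a + 1)).image (· * a)) with hXS
  set YS := insert (m - 1) ((Finset.range ((m - 1) / b + 1)).image (· * b)) with hYS
  have hsub : domain2 n m w ⊆
      ((Finset.range a ∪ Finset.Icc (n - a) (n - 1)) ×ˢ Finset.range b) ∪
      ((Finset.Icc 1 (a - 1)) ×ˢ {m - 1}) ∪ (XS ×ˢ {b + 1}) ∪ (XS ×ˢ YS) := by
    intro p hp
    rw [mem_domain2] at hp
    obtain ⟨hp1, hp2, hp3⟩ := hp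
    have hp3' : mainW n m a b p ≠ none := by
      intro hc; rw [hwdef] at hp3; rw [hc] at hp3; simp at hp3
    unfold mainW at hp3'
    simp only [Finset.mem_union]
    split_ifs at hp3' with h1 h2 h3 h30 h4
    · refine Or.inl (Or.inl (Or.inl ?_))
      rw [Finset.mem_product, Finset.mem_union, Finset.mem_range,
        Finset.mem_range, Finset.mem_Icc]
      exact ⟨by rcases h1.2 with h | h; exacts [Or.inl h, Or.inr h], h1.1⟩
    · refine Or.inl (Or.inl (Or.inr ?_))
      rw [Finset.mem_product, Finset.mem_Icc, Finset.mem_singleton]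
      exact ⟨⟨h2.2.1, by omega⟩, h2.1⟩
    · refine Or.inl (Or.inr ?_)
      rw [Finset.mem_product, Finset.mem_singleton]
      exact ⟨hXGset p.1 h3.2, h3.1⟩
    · refine Or.inl (Or.inr ?_)
      rw [Finset.mem_product, Finset.mem_singleton]
      exact ⟨hXGset p.1 h3.2, h3.1⟩
    · refine Or.inr ?_
      rw [Finset.mem_product]
      exact ⟨hXGset p.1 h4.1, hYGset p.2 h4.2⟩
    · exact absurd rfl hp3'
  have hXScard : XS.card ≤ (n - 1) / a + 2 := by
    calc XS.card ≤ ((Finset.range ((n - 1) / a + 1)).image (· * a)).card + 1 :=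
          Finset.card_insert_le _ _
      _ ≤ ((n - 1) / a + 1) + 1 := by
          have := Finset.card_image_le (s := Finset.range ((n - 1) / a + 1)) (f := (· * a))
          simp only [Finset.card_range] at this
          omega
      _ = (n - 1) / a + 2 := by omega
  have hYScard : YS.card ≤ (m - 1) / b + 2 := by
    calc YS.card ≤ ((Finset.range ((m - 1) / b + 1)).image (· * b)).card + 1 :=
          Finset.card_insert_le _ _
      _ ≤ ((m - 1) / b + 1) + 1 := by
          have := Finset.card_image_le (s := Finset.range ((m - 1) / b + 1)) (f := (· * b))
          simp only [Finset.card_range] at this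
          omega
      _ = (m - 1) / b + 2 := by omega
  have hT1 : ((Finset.range a ∪ Finset.Icc (n - a) (n - 1)) ×ˢ
      (Finset.range b : Finset ℕ)).card ≤ 2 * a * b := by
    rw [Finset.card_product, Finset.card_range]
    have h1 : (Finset.range a ∪ Finset.Icc (n - a) (n - 1)).card ≤ 2 * a := by
      calc (Finset.range a ∪ Finset.Icc (n - a) (n - 1)).card
          ≤ (Finset.range a).card + (Finset.Icc (n - a) (n - 1)).card :=
            Finset.card_union_le _ _
        _ ≤ a + a := by
            rw [Finset.card_range, Nat.card_Icc]
            omega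
        _ = 2 * a := by omega
    exact Nat.mul_le_mul_right b h1
  have hT2 : ((Finset.Icc 1 (a - 1)) ×ˢ ({m - 1} : Finset ℕ)).card ≤ a := by
    rw [Finset.card_product, Nat.card_Icc, Finset.card_singleton]
    omega
  have hT3 : (XS ×ˢ ({b + 1} : Finset ℕ)).card ≤ (n - 1) / a + 2 := by
    rw [Finset.card_product, Finset.card_singleton]
    omega
  have hT4 : (XS ×ˢ YS).card ≤ ((n - 1) / a + 2) * ((m - 1) / b + 2) := by
    rw [Finset.card_product]
    exact Nat.mul_le_mul hXScard hYScard
  have := Finset.card_le_card hsub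
  have hu1 := Finset.card_union_le
    (((Finset.range a ∪ Finset.Icc (n - a) (n - 1)) ×ˢ Finset.range b) ∪
      ((Finset.Icc 1 (a - 1)) ×ˢ {m - 1}) ∪ (XS ×ˢ {b + 1})) (XS ×ˢ YS)
  have hu2 := Finset.card_union_le
    (((Finset.range a ∪ Finset.Icc (n - a) (n - 1)) ×ˢ Finset.range b) ∪
      ((Finset.Icc 1 (a - 1)) ×ˢ {m - 1})) (XS ×ˢ ({b + 1} : Finset ℕ))
  have hu3 := Finset.card_union_le
    ((Finset.range a ∪ Finset.Icc (n - a) (n - 1)) ×ˢ (Finset.range b : Finset ℕ))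
    ((Finset.Icc 1 (a - 1)) ×ˢ ({m - 1} : Finset ℕ))
  omega

lemma cast_le_HB2 {k n m : ℕ} (hk : 2 ≤ k) {w : ℕ × ℕ → Option Bool}
    (h : Unbordered2 n m w) :
    ((n : ℝ) * m) - ((domain2 n m w).card : ℝ) ≤ (HB2 k n m : ℝ) := by
  let f : Bool → Fin k := fun t => ⟨cond t 1 0, by cases t <;> simp <;> omega⟩
  have hf : Function.Injective f := by
    intro x y hxy
    have hval : cond x 1 0 = cond y 1 0 := congrArg Fin.val hxy
    cases x <;> cases y <;> simp_all
  have h2 := unbordered_map f hf h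
  have h3 := le_HB2 h2
  have h4 : holes2 n m (fun p => (w p).map f) = n * m - (domain2 n m w).card := by
    unfold holes2; rw [card_domain2_map]
  have h5 : (domain2 n m w).card ≤ n * m := card_domain2_le n m w
  have h6 : (n * m - (domain2 n m w).card : ℕ) ≤ HB2 k n m := h4 ▸ h3
  have h7 : ((n * m - (domain2 n m w).card : ℕ) : ℝ) ≤ (HB2 k n m : ℝ) :=
    Nat.cast_le.mpr h6
  rw [Nat.cast_sub h5] at h7
  push_cast at h7
  linarith

lemma nat_sqrt_le (n : ℕ) : (Nat.sqrt n : ℝ) ≤ Real.sqrt n := by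
  have h : ((Nat.sqrt n : ℝ)) ^ 2 ≤ (n : ℝ) := by
    have := Nat.sqrt_le' n
    exact_mod_cast this
  calc (Nat.sqrt n : ℝ) = Real.sqrt ((Nat.sqrt n : ℝ) ^ 2) :=
        (Real.sqrt_sq (by positivity)).symm
    _ ≤ Real.sqrt n := Real.sqrt_le_sqrt h

lemma sqrt_le_nat_sqrt_succ (n : ℕ) : Real.sqrt n ≤ (Nat.sqrt n : ℝ) + 1 := by
  have h : (n : ℝ) ≤ ((Nat.sqrt n : ℝ) + 1) ^ 2 := by
    have := Nat.lt_succ_sqrt' n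
    have h2 : n ≤ (Nat.sqrt n + 1) ^ 2 := le_of_lt this
    exact_mod_cast h2
  calc Real.sqrt n ≤ Real.sqrt (((Nat.sqrt n : ℝ) + 1) ^ 2) := Real.sqrt_le_sqrt h
    _ = (Nat.sqrt n : ℝ) + 1 := Real.sqrt_sq (by positivity)

lemma sqrt_ge_four {n : ℕ} (hn : 16 ≤ n) : (4 : ℝ) ≤ Real.sqrt n := by
  have : (4 : ℝ) = Real.sqrt 16 := by
    rw [show (16 : ℝ) = 4 ^ 2 by norm_num, Real.sqrt_sq (by norm_num)]
  rw [this]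
  exact Real.sqrt_le_sqrt (by exact_mod_cast hn)

lemma sqrt_ge_one {n : ℕ} (hn : 1 ≤ n) : (1 : ℝ) ≤ Real.sqrt n := by
  have : (1 : ℝ) = Real.sqrt 1 := by
    rw [Real.sqrt_one]
  rw [this]
  exact Real.sqrt_le_sqrt (by exact_mod_cast hn)

set_option maxHeartbeats 2000000 in
theorem final_bound :
    ∃ C : ℝ, 0 < C ∧ ∀ k n m : ℕ, 2 ≤ k → 1 ≤ n → 1 ≤ m →
      (n : ℝ) * (m : ℝ) - 2 * Real.sqrt 2 * Real.sqrt ((n : ℝ) * (m : ℝ)) -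
        C * (Real.sqrt (n : ℝ) + Real.sqrt (m : ℝ)) ≤ (HB2 k n m : ℝ) := by
  refine ⟨200, by norm_num, ?_⟩
  intro k n m hk hn hm
  have hs2sq : Real.sqrt 2 * Real.sqrt 2 = 2 := Real.mul_self_sqrt (by norm_num)
  have hs2nonneg : (0 : ℝ) ≤ Real.sqrt 2 := Real.sqrt_nonneg 2
  have hs2ge1 : (1 : ℝ) ≤ Real.sqrt 2 := by nlinarith
  have hsn0 : (0 : ℝ) ≤ Real.sqrt n := Real.sqrt_nonneg _
  have hsm0 : (0 : ℝ) ≤ Real.sqrt m := Real.sqrt_nonneg _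
  have hnm : Real.sqrt ((n : ℝ) * m) = Real.sqrt n * Real.sqrt m :=
    Real.sqrt_mul (by positivity) _
  have hHB0 : (0 : ℝ) ≤ (HB2 k n m : ℝ) := Nat.cast_nonneg _
  rcases le_or_gt 16 n with hn16 | hn16 <;> rcases le_or_gt 16 m with hm16 | hm16
  · -- main case : both n, m ≥ 16
    obtain ⟨hunb, hcard⟩ := main_exists n m hn16 hm16
    have h1 := cast_le_HB2 hk hunb
    set a := Nat.sqrt n with hadef
    set b := Nat.sqrt (m / 2) with hbdef
    set d := (n - 1) / a with hddef
    set e := (m - 1) / b with hedef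
    set sn := Real.sqrt n with hsndef
    set sm := Real.sqrt m with hsmdef
    set s2 := Real.sqrt 2 with hs2def
    have ha4 : 4 ≤ a := Nat.le_sqrt.mpr (by omega)
    have hb2 : 2 ≤ b := Nat.le_sqrt.mpr (by omega)
    have f1 : (a : ℝ) ≤ sn := nat_sqrt_le n
    have f2 : sn ≤ (a : ℝ) + 1 := sqrt_le_nat_sqrt_succ n
    have f6 : sn * sn = n := Real.mul_self_sqrt (by positivity)
    have f7 : sm * sm = m := Real.mul_self_sqrt (by positivity)
    have f8 : (4 : ℝ) ≤ sn := sqrt_ge_four hn16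
    have f9 : (4 : ℝ) ≤ sm := sqrt_ge_four hm16
    have hb1n : b * b ≤ m / 2 := by
      have := Nat.sqrt_le' (m / 2); rwa [pow_two] at this
    have hbbm : 2 * (b * b) ≤ m := by omega
    have hbb2 : m ≤ 2 * ((b + 1) * (b + 1)) := by
      have h := Nat.lt_succ_sqrt' (m / 2)
      rw [pow_two, Nat.succ_eq_add_one, ← hbdef] at h
      omega
    have f3 : s2 * (b : ℝ) ≤ sm := by
      have h : (2 * ((b : ℝ) * (b : ℝ))) ≤ (m : ℝ) := by exact_mod_cast hbbm
      have h2 : s2 * (b : ℝ) = Real.sqrt (2 * ((b : ℝ) * (b : ℝ))) := by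
        rw [Real.sqrt_mul (by norm_num), Real.sqrt_mul_self (by positivity)]
      rw [h2]; exact Real.sqrt_le_sqrt h
    have f4 : sm ≤ s2 * ((b : ℝ) + 1) := by
      have h : (m : ℝ) ≤ 2 * (((b : ℝ) + 1) * ((b : ℝ) + 1)) := by exact_mod_cast hbb2
      have h2 : s2 * ((b : ℝ) + 1) = Real.sqrt (2 * (((b : ℝ) + 1) * ((b : ℝ) + 1))) := by
        rw [Real.sqrt_mul (by norm_num), Real.sqrt_mul_self (by positivity)]
      rw [h2]; exact Real.sqrt_le_sqrt h
    have hd0 : (0 : ℝ) ≤ (d : ℝ) := Nat.cast_nonneg _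
    have he0 : (0 : ℝ) ≤ (e : ℝ) := Nat.cast_nonneg _
    have ha0 : (0 : ℝ) ≤ (a : ℝ) := Nat.cast_nonneg _
    have hb0 : (2 : ℝ) ≤ (b : ℝ) := by exact_mod_cast hb2
    have hd : (d : ℝ) * a ≤ (n : ℝ) - 1 := by
      have h0 : d * a ≤ n - 1 := Nat.div_mul_le_self _ _
      have h1 : ((d * a : ℕ) : ℝ) ≤ ((n - 1 : ℕ) : ℝ) := (Nat.cast_le (α := ℝ)).mpr h0
      rw [Nat.cast_mul, Nat.cast_sub (by omega : 1 ≤ n)] at h1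
      simpa using h1
    have he : (e : ℝ) * b ≤ (m : ℝ) - 1 := by
      have h0 : e * b ≤ m - 1 := Nat.div_mul_le_self _ _
      have h1 : ((e * b : ℕ) : ℝ) ≤ ((m - 1 : ℕ) : ℝ) := (Nat.cast_le (α := ℝ)).mpr h0
      rw [Nat.cast_mul, Nat.cast_sub (by omega : 1 ≤ m)] at h1
      simpa using h1
    have hNa : (d : ℝ) ≤ sn + 2 := by
      have h2 : (d : ℝ) * (sn - 1) ≤ (d : ℝ) * a :=
        mul_le_mul_of_nonneg_left (by linarith) hd0
      nlinarith [h2, hd, f6, f8]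
    have hb' : s2 * sm ≤ 2 * (b : ℝ) + 2 := by
      have h2 := mul_le_mul_of_nonneg_left f4 hs2nonneg
      nlinarith [h2]
    have hNb : (e : ℝ) ≤ s2 * sm + 4 := by
      have h2 : (e : ℝ) * (s2 * sm - 2) ≤ (e : ℝ) * (2 * (b : ℝ)) :=
        mul_le_mul_of_nonneg_left (by linarith) he0
      have h3 : (2 : ℝ) * ((e : ℝ) * b) ≤ 2 * ((m : ℝ) - 1) := by linarith
      nlinarith [h2, h3, f7, f9, hs2ge1, hs2sq]
    have h2b : 2 * (b : ℝ) ≤ s2 * sm := by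
      have h2 := mul_le_mul_of_nonneg_left f3 hs2nonneg
      nlinarith [h2]
    have h2ab : 2 * ((a : ℝ) * (b : ℝ)) ≤ s2 * (sn * sm) := by
      have t1 : (a : ℝ) * (2 * (b : ℝ)) ≤ (a : ℝ) * (s2 * sm) :=
        mul_le_mul_of_nonneg_left h2b ha0
      have t2 : (a : ℝ) * (s2 * sm) ≤ sn * (s2 * sm) :=
        mul_le_mul_of_nonneg_right f1 (by positivity)
      nlinarith [t1, t2]
    have hprod : ((d : ℝ) + 2) * ((e : ℝ) + 2) ≤ (sn + 4) * (s2 * sm + 6) := by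
      apply mul_le_mul (by linarith) (by linarith) (by positivity) (by positivity)
    have hs2le : s2 ≤ 3 / 2 := by nlinarith
    have hcR : ((domain2 n m (mainW n m a b)).card : ℝ) ≤
        2 * (a : ℝ) * b + a + ((d : ℝ) + 2) + ((d : ℝ) + 2) * ((e : ℝ) + 2) := by
      have h := (Nat.cast_le (α := ℝ)).mpr hcard
      push_cast at h
      linarith
    have hfinal : ((domain2 n m (mainW n m a b)).card : ℝ) ≤
        2 * s2 * (sn * sm) + 200 * (sn + sm) := by
      have hexp : (sn + 4) * (s2 * sm + 6) =
          s2 * (sn * sm) + 6 * sn + 4 * (s2 * sm) + 24 := by ring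
      nlinarith [hcR, h2ab, hprod, hs2le, f8, f9, hsm0, hsn0, hs2nonneg]
    rw [hnm]
    linarith [h1, hfinal]
  · -- n ≥ 16, m < 16 : column construction
    obtain ⟨hunb, hcard⟩ := col_exists n m hn16 hm
    have h1 := cast_le_HB2 hk hunb
    have hsn4 : (4 : ℝ) ≤ Real.sqrt n := sqrt_ge_four hn16
    have hc : ((domain2 n m (colW n (Nat.sqrt n))).card : ℝ) ≤
        15 * (2 * Real.sqrt n + 5) := by
      have h2 : m * (2 * Nat.sqrt n + 5) ≤ 15 * (2 * Nat.sqrt n + 5) :=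
        Nat.mul_le_mul_right _ (by omega)
      have h3 := (Nat.cast_le (α := ℝ)).mpr (hcard.trans h2)
      push_cast at h3
      nlinarith [nat_sqrt_le n, h3]
    have h2s : (0 : ℝ) ≤ 2 * Real.sqrt 2 * Real.sqrt ((n : ℝ) * m) := by positivity
    have hsm1 : (1 : ℝ) ≤ Real.sqrt m := sqrt_ge_one hm
    nlinarith [h1, hc]
  · -- n < 16, m ≥ 16 : transposed column construction
    obtain ⟨hunb, hcard⟩ := col_exists m n hm16 hn
    have hunb' := unbordered_transpose hunb
    have hcard' := card_domain2_transpose (n := m) (m := n) (colW m (Nat.sqrt m))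
    have h1 := cast_le_HB2 hk hunb'
    rw [hcard'] at h1
    have hsm4 : (4 : ℝ) ≤ Real.sqrt m := sqrt_ge_four hm16
    have hc : ((domain2 m n (colW m (Nat.sqrt m))).card : ℝ) ≤
        15 * (2 * Real.sqrt m + 5) := by
      have h2 : n * (2 * Nat.sqrt m + 5) ≤ 15 * (2 * Nat.sqrt m + 5) :=
        Nat.mul_le_mul_right _ (by omega)
      have h3 := (Nat.cast_le (α := ℝ)).mpr (hcard.trans h2)
      push_cast at h3
      nlinarith [nat_sqrt_le m, h3]
    have h2s : (0 : ℝ) ≤ 2 * Real.sqrt 2 * Real.sqrt ((n : ℝ) * m) := by positivity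
    have hsn1 : (1 : ℝ) ≤ Real.sqrt n := sqrt_ge_one hn
    nlinarith [h1, hc]
  · -- both small
    have hnm225 : (n : ℝ) * m ≤ 225 := by
      have : n * m ≤ 225 := by nlinarith
      exact_mod_cast this
    have hsn1 : (1 : ℝ) ≤ Real.sqrt n := sqrt_ge_one hn
    have hsm1 : (1 : ℝ) ≤ Real.sqrt m := sqrt_ge_one hm
    have h2s : (0 : ℝ) ≤ 2 * Real.sqrt 2 * Real.sqrt ((n : ℝ) * m) := by positivity
    nlinarith [hHB0]

end HB2Aux

/-- There exists a constant `C > 0` such that for all `n, m ≥ 1`,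
`HB2₂(n,m) ≥ nm - 2√2·√(nm) - C(√n + √m)` over a binary alphabet; consequently the same
lower bound holds for `HB2_k(n,m)` for every `k ≥ 2`. -/
theorem HB2_lower_bound :
    ∃ C : ℝ, 0 < C ∧ ∀ k n m : ℕ, 2 ≤ k → 1 ≤ n → 1 ≤ m →
      (n : ℝ) * (m : ℝ) - 2 * Real.sqrt 2 * Real.sqrt ((n : ℝ) * (m : ℝ)) -
        C * (Real.sqrt (n : ℝ) + Real.sqrt (m : ℝ)) ≤ (HB2 k n m : ℝ) := by
  exact HB2Aux.final_bound
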